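/- Every Howell design H(m, 2n) yields a feasible schedule of the Business Dinner Problem with s = 2n suppliers, σ = 2, t ≥ n tables, and ⌈c/γ⌉ = m customer groups, using exactly m dinners. -/

import Mathlib

/-- A schedule of `d` dinners for the Business Dinner Problem with `t` tables,
`s` suppliers, `c` customers, at most `σ` suppliers and at most `γ` customers
per table. `supSeat e i = some tb` means supplier `i` sits at table `tb` at
dinner `e` (and `none` means the supplier skips the dinner); similarly for
customers. -/
structure BDSchedule (t s c σ γ d : ℕ) where
  supSeat : Fin d → Fin s → Option (Fin t)
  cusSeat : Fin d → Fin c → Option (Fin t)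
  /-- at most `σ` suppliers at each table at each dinner -/
  supCap : ∀ (e : Fin d) (tb : Fin t),
    (Finset.univ.filter fun i : Fin s => supSeat e i = some tb).card ≤ σ
  /-- at most `γ` customers at each table at each dinner -/
  cusCap : ∀ (e : Fin d) (tb : Fin t),
    (Finset.univ.filter fun k : Fin c => cusSeat e k = some tb).card ≤ γ
  /-- every supplier and customer share a table at exactly one dinner -/
  meetOnce : ∀ (i : Fin s) (k : Fin c), ∃! e : Fin d,
    ∃ tb : Fin t, supSeat e i = some tb ∧ cusSeat e k = some tb
  /-- two distinct suppliers share a table at no more than one dinner -/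
  supPairOnce : ∀ i j : Fin s, i ≠ j →
    (Finset.univ.filter fun e : Fin d =>
      ∃ tb : Fin t, supSeat e i = some tb ∧ supSeat e j = some tb).card ≤ 1

/-- A Howell design `H(m, 2n)`: an `m × m` array whose cells are empty or contain
an unordered pair of distinct symbols from a set of `2n` symbols, such that every
symbol occurs exactly once in each row and in each column, and every pair occurs
at most once in the array. -/
structure HowellDesign (m n : ℕ) where
  cell : Fin m → Fin m → Option (Sym2 (Fin (2 * n)))
  notDiag : ∀ r c e, cell r c = some e → ¬ e.IsDiag
  rowOnce : ∀ (r : Fin m) (x : Fin (2 * n)),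
    ∃! col : Fin m, ∃ e, cell r col = some e ∧ x ∈ e
  colOnce : ∀ (col : Fin m) (x : Fin (2 * n)),
    ∃! r : Fin m, ∃ e, cell r col = some e ∧ x ∈ e
  pairOnce : ∀ (r₁ c₁ r₂ c₂ : Fin m) (e : Sym2 (Fin (2 * n))),
    cell r₁ c₁ = some e → cell r₂ c₂ = some e → r₁ = r₂ ∧ c₁ = c₂

namespace HowellAux

open Finset

variable {m n : ℕ} (H : HowellDesign m n)

noncomputable def colOf (e : Fin m) (x : Fin (2 * n)) : Fin m :=
  (H.rowOnce e x).exists.choose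

lemma colOf_spec (e : Fin m) (x : Fin (2 * n)) :
    ∃ p, H.cell e (colOf H e x) = some p ∧ x ∈ p :=
  (H.rowOnce e x).exists.choose_spec

lemma colOf_eq (e : Fin m) (x : Fin (2 * n)) (col : Fin m)
    (h : ∃ p, H.cell e col = some p ∧ x ∈ p) : colOf H e x = col :=
  (H.rowOnce e x).unique (colOf_spec H e x) h

noncomputable def fcols (e : Fin m) : Finset (Fin m) :=
  univ.filter fun col => (H.cell e col).isSome

lemma colOf_mem_fcols (e : Fin m) (x : Fin (2 * n)) : colOf H e x ∈ fcols H e := by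
  obtain ⟨p, hp, _⟩ := colOf_spec H e x
  simp [fcols, hp]

lemma card_fcols (e : Fin m) : (fcols H e).card = n := by
  classical
  have key : (univ : Finset (Fin (2 * n))).card =
      ∑ col ∈ fcols H e, (univ.filter fun x => colOf H e x = col).card :=
    Finset.card_eq_sum_card_fiberwise fun x _ => colOf_mem_fcols H e x
  have hfib : ∀ col ∈ fcols H e, (univ.filter fun x => colOf H e x = col).card = 2 := by
    intro col hcol
    simp only [fcols, mem_filter, Option.isSome_iff_exists] at hcol
    obtain ⟨_, p, hp⟩ := hcol
    obtain ⟨⟨a, b⟩, rfl⟩ := p.exists_rep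
    have hab : a ≠ b := fun h => H.notDiag e col _ hp (by simp [h])
    have hset : (univ.filter fun x => colOf H e x = col) = {a, b} := by
      ext x
      simp only [mem_filter, mem_univ, true_and, mem_insert, mem_singleton]
      constructor
      · intro hx
        obtain ⟨p', hp', hxp'⟩ := colOf_spec H e x
        rw [hx, hp] at hp'
        obtain rfl : s(a, b) = p' := Option.some.inj hp'
        simpa using hxp'
      · intro hx
        exact colOf_eq H e x col ⟨s(a, b), hp, by simpa using hx⟩
    rw [hset, Finset.card_insert_of_notMem (by simpa using hab), Finset.card_singleton]
  rw [Finset.sum_congr rfl hfib, Finset.sum_const, smul_eq_mul] at key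
  simp only [Finset.card_univ, Fintype.card_fin] at key
  omega

noncomputable def rank (e col : Fin m) : ℕ := ((fcols H e).filter (· < col)).card

lemma rank_lt (e : Fin m) (col : Fin m) (h : col ∈ fcols H e) : rank H e col < n := by
  have hss : (fcols H e).filter (· < col) ⊂ fcols H e := by
    refine Finset.ssubset_iff_of_subset (Finset.filter_subset _ _) |>.2 ⟨col, h, ?_⟩
    simp
  calc rank H e col < (fcols H e).card := Finset.card_lt_card hss
    _ = n := card_fcols H e

lemma rank_injOn (e : Fin m) (c1 c2 : Fin m) (h1 : c1 ∈ fcols H e) (h2 : c2 ∈ fcols H e)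
    (h : rank H e c1 = rank H e c2) : c1 = c2 := by
  by_contra hne
  rcases lt_or_gt_of_ne hne with hlt | hlt
  · have : rank H e c1 < rank H e c2 := by
      apply Finset.card_lt_card
      refine Finset.ssubset_iff_of_subset ?_ |>.2 ⟨c1, by simp [Finset.mem_filter, h1, hlt], by simp⟩
      intro x hx
      simp only [Finset.mem_filter] at hx ⊢
      exact ⟨hx.1, lt_trans hx.2 hlt⟩
    omega
  · have : rank H e c2 < rank H e c1 := by
      apply Finset.card_lt_card
      refine Finset.ssubset_iff_of_subset ?_ |>.2 ⟨c2, by simp [Finset.mem_filter, h2, hlt], by simp⟩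
      intro x hx
      simp only [Finset.mem_filter] at hx ⊢
      exact ⟨hx.1, lt_trans hx.2 hlt⟩
    omega

end HowellAux

open HowellAux Finset

/-- Every Howell design `H(m, 2n)` yields a feasible schedule of the Business
Dinner Problem with `s = 2n` suppliers, `σ = 2`, `t ≥ n` tables and
`m = ⌈c/γ⌉` customer groups, using exactly `m` dinners. -/
theorem howell_gives_schedule (m n t c γ : ℕ) (H : HowellDesign m n)
    (ht : n ≤ t) (hγ : 1 ≤ γ) (hc : 1 ≤ c) (hm : (⌈(c : ℚ) / γ⌉ : ℤ) = (m : ℤ)) :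
    Nonempty (BDSchedule t (2 * n) c 2 γ m) := by
  classical
  have hγ0 : (0 : ℚ) < γ := by exact_mod_cast hγ
  have hcm : c ≤ m * γ := by
    have h1 : (c : ℚ) / γ ≤ (m : ℚ) := by
      have := Int.ceil_le.mp (le_of_eq hm)
      exact_mod_cast this
    have h2 : (c : ℚ) ≤ (m : ℚ) * γ := (div_le_iff₀ hγ0).mp h1
    exact_mod_cast h2
  rcases Nat.eq_zero_or_pos n with hn0 | hn
  · -- degenerate case: no suppliers
    subst hn0
    have hz : ∀ i : Fin (2 * 0), False := fun i => absurd i.isLt (by omega)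
    refine ⟨⟨fun _ i => (hz i).elim, fun _ _ => none, ?_, ?_, ?_, ?_⟩⟩
    · intro e tb
      calc _ ≤ (univ : Finset (Fin (2 * 0))).card := Finset.card_filter_le _ _
        _ ≤ 2 := by simp
    · intro e tb
      have : (univ.filter fun k : Fin c => (none : Option (Fin t)) = some tb) = ∅ := by
        simp
      rw [this]; simp
    · intro i k
      exact (hz i).elim
    · intro i j _
      exact (hz i).elim
  have ht0 : 0 < t := lt_of_lt_of_le hn ht
  -- table of a column at a dinner
  let tbl : Fin m → Fin m → Fin t := fun e col => ⟨rank H e col % t, Nat.mod_lt _ ht0⟩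
  have tbl_inj : ∀ (e : Fin m) (c1 c2 : Fin m), c1 ∈ fcols H e → c2 ∈ fcols H e →
      tbl e c1 = tbl e c2 → c1 = c2 := by
    intro e c1 c2 h1 h2 h
    have hr1 : rank H e c1 < t := lt_of_lt_of_le (rank_lt H e c1 h1) ht
    have hr2 : rank H e c2 < t := lt_of_lt_of_le (rank_lt H e c2 h2) ht
    have : rank H e c1 % t = rank H e c2 % t := congrArg Fin.val h
    rw [Nat.mod_eq_of_lt hr1, Nat.mod_eq_of_lt hr2] at this
    exact rank_injOn H e c1 c2 h1 h2 this
  -- customer groups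
  have hm0 : 0 < m := by
    by_contra h
    have : m = 0 := by omega
    subst this
    omega
  let gp : Fin c → Fin m := fun k => ⟨k.val / γ, by
    have : k.val < m * γ := lt_of_lt_of_le k.2 hcm
    exact Nat.div_lt_of_lt_mul (by rwa [Nat.mul_comm] at this)⟩
  refine ⟨⟨fun e x => some (tbl e (colOf H e x)),
          fun e k => if h : (H.cell e (gp k)).isSome then some (tbl e (gp k)) else none,
          ?_, ?_, ?_, ?_⟩⟩
  · -- supCap
    intro e tb
    rcases (univ.filter fun x : Fin (2*n) => some (tbl e (colOf H e x)) = some tb).eq_empty_or_nonempty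
      with he | ⟨x, hx⟩
    · rw [he]; simp
    · simp only [mem_filter, mem_univ, true_and, Option.some.injEq] at hx
      obtain ⟨p, hp, hxp⟩ := colOf_spec H e x
      obtain ⟨⟨a, b⟩, rfl⟩ := p.exists_rep
      have hab : a ≠ b := fun h => H.notDiag e _ _ hp (by simp [h])
      have hsub : (univ.filter fun y : Fin (2*n) => some (tbl e (colOf H e y)) = some tb)
          ⊆ {a, b} := by
        intro y hy
        simp only [mem_filter, mem_univ, true_and, Option.some.injEq] at hy
        have hcy : colOf H e y = colOf H e x :=
          tbl_inj e _ _ (colOf_mem_fcols H e y) (colOf_mem_fcols H e x) (hy.trans hx.symm)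
        obtain ⟨p', hp', hyp'⟩ := colOf_spec H e y
        rw [hcy, hp] at hp'
        obtain rfl := Option.some.inj hp'
        simpa using hyp'
      calc _ ≤ ({a, b} : Finset (Fin (2*n))).card := Finset.card_le_card hsub
        _ ≤ 2 := Finset.card_insert_le _ _ |>.trans (by simp)
  · -- cusCap
    intro e tb
    rcases (univ.filter fun k : Fin c => (if h : (H.cell e (gp k)).isSome then
        some (tbl e (gp k)) else none) = some tb).eq_empty_or_nonempty with he | ⟨k, hk⟩
    · rw [he]; simpa using Nat.zero_le γ
    · simp only [mem_filter, mem_univ, true_and] at hk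
      have hsub : (univ.filter fun k' : Fin c => (if h : (H.cell e (gp k')).isSome then
          some (tbl e (gp k')) else none) = some tb)
          ⊆ univ.filter fun k' : Fin c => gp k' = gp k := by
        intro k' hk'
        simp only [mem_filter, mem_univ, true_and] at hk' ⊢
        by_cases h1 : (H.cell e (gp k)).isSome
        · by_cases h2 : (H.cell e (gp k')).isSome
          · rw [dif_pos h1] at hk
            rw [dif_pos h2] at hk'
            exact tbl_inj e _ _ (by simp [fcols, h2]) (by simp [fcols, h1])
              (Option.some.inj (hk'.trans hk.symm))
          · rw [dif_neg h2] at hk'; exact absurd hk' (by simp)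
        · rw [dif_neg h1] at hk; exact absurd hk (by simp)
      have hcard : (univ.filter fun k' : Fin c => gp k' = gp k).card ≤ γ := by
        have : ∀ k' ∈ univ.filter fun k' : Fin c => gp k' = gp k,
            k'.val % γ ∈ Finset.range γ := by
          intro k' _
          simp [Nat.mod_lt _ (by omega : 0 < γ)]
        refine (Finset.card_le_card_of_injOn (fun k' => k'.val % γ) (fun k' hk' => this k' hk') ?_).trans (by simp)
        intro k1 h1 k2 h2 hmod
        simp only [Finset.mem_coe, mem_filter, mem_univ, true_and] at h1 h2
        have hd : k1.val / γ = k2.val / γ := by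
          have := congrArg Fin.val (h1.trans h2.symm)
          simpa [gp] using this
        have hmod' : k1.val % γ = k2.val % γ := hmod
        have e1 : γ * (k1.val / γ) + k1.val % γ = k1.val := Nat.div_add_mod _ _
        have e2 : γ * (k2.val / γ) + k2.val % γ = k2.val := Nat.div_add_mod _ _
        rw [hd, hmod'] at e1
        exact Fin.ext (e1.symm.trans e2)
      exact (Finset.card_le_card hsub).trans hcard
  · -- meetOnce
    intro x k
    have key : ∀ e : Fin m, (∃ tb : Fin t, some (tbl e (colOf H e x)) = some tb ∧
        (if h : (H.cell e (gp k)).isSome then some (tbl e (gp k)) else none) = some tb) ↔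
        ∃ p, H.cell e (gp k) = some p ∧ x ∈ p := by
      intro e
      constructor
      · rintro ⟨tb, h1, h2⟩
        by_cases h : (H.cell e (gp k)).isSome
        · rw [dif_pos h] at h2
          have : colOf H e x = gp k :=
            tbl_inj e _ _ (colOf_mem_fcols H e x) (by simp [fcols, h])
              (Option.some.inj (h1.trans h2.symm))
          obtain ⟨p, hp, hxp⟩ := colOf_spec H e x
          rw [this] at hp
          exact ⟨p, hp, hxp⟩
        · rw [dif_neg h] at h2; exact absurd h2 (by simp)
      · rintro ⟨p, hp, hxp⟩
        have hcol : colOf H e x = gp k := colOf_eq H e x _ ⟨p, hp, hxp⟩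
        have h : (H.cell e (gp k)).isSome := by simp [hp]
        exact ⟨tbl e (gp k), by rw [hcol], by rw [dif_pos h]⟩
    obtain ⟨e, he, hu⟩ := H.colOnce (gp k) x
    exact ⟨e, (key e).mpr he, fun e' he' => hu e' ((key e').mp he')⟩
  · -- supPairOnce
    intro x y hxy
    rw [Finset.card_le_one]
    intro e1 h1 e2 h2
    simp only [mem_filter, mem_univ, true_and] at h1 h2
    have hcell : ∀ e : Fin m, (∃ tb : Fin t, some (tbl e (colOf H e x)) = some tb ∧
        some (tbl e (colOf H e y)) = some tb) →
        H.cell e (colOf H e x) = some s(x, y) := by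
      rintro e ⟨tb, hx', hy'⟩
      have hcy : colOf H e x = colOf H e y :=
        tbl_inj e _ _ (colOf_mem_fcols H e x) (colOf_mem_fcols H e y)
          (Option.some.inj (hx'.trans hy'.symm))
      obtain ⟨p, hp, hxp⟩ := colOf_spec H e x
      obtain ⟨p', hp', hyp'⟩ := colOf_spec H e y
      rw [← hcy, hp] at hp'
      obtain rfl := Option.some.inj hp'
      rw [(Sym2.mem_and_mem_iff hxy).mp ⟨hxp, hyp'⟩] at hp
      exact hp
    exact (H.pairOnce e1 _ e2 _ s(x, y) (hcell e1 h1) (hcell e2 h2)).1
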